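/- Let μ be a Borel probability measure on ℝ and let β be a countable Borel partition of ℝ with finite Shannon entropy H_μ(β) = −∑_{A∈β} μ(A) log μ(A) < ∞. For x ∈ ℝ, let β(x) denote the atom of β containing x, and define g_*(x) = inf { μ(β(x) ∩ I)/μ(I) : I an open interval, x ∈ I, μ(I) > 0 }. Then ∫ −log g_*(x) dμ(x) ≤ H_μ(β) + log 2 + 1. -/

import Mathlib

open MeasureTheory

section Aux
open Set Classical Real
set_option maxHeartbeats 1000000

lemma three_ordConnected {I₁ I₂ I₃ : Set ℝ} (h₁ : I₁.OrdConnected) (h₂ : I₂.OrdConnected)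
    (h₃ : I₃.OrdConnected) {x : ℝ} (hx₁ : x ∈ I₁) (hx₂ : x ∈ I₂) (hx₃ : x ∈ I₃) :
    I₁ ⊆ I₂ ∪ I₃ ∨ I₂ ⊆ I₁ ∪ I₃ ∨ I₃ ⊆ I₁ ∪ I₂ := by
  by_contra h
  push_neg at h
  obtain ⟨hn₁, hn₂, hn₃⟩ := h
  obtain ⟨y₁, hy₁, hy₁'⟩ := Set.not_subset.mp hn₁
  obtain ⟨y₂, hy₂, hy₂'⟩ := Set.not_subset.mp hn₂
  obtain ⟨y₃, hy₃, hy₃'⟩ := Set.not_subset.mp hn₃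
  simp only [Set.mem_union, not_or] at hy₁' hy₂' hy₃'
  -- helper : same side contradiction
  have left : ∀ {I J : Set ℝ}, I.OrdConnected → J.OrdConnected → ∀ {y z : ℝ},
      x ∈ I → x ∈ J → y ∈ I → z ∈ J → y ∉ J → z ∉ I → y ≤ x → z ≤ x → False := by
    intro I J hI hJ y z hxI hxJ hyI hzJ hyJ hzI hy hz
    rcases le_total y z with hyz | hyz
    · exact hzI (hI.out hyI hxI ⟨hyz, hz⟩)
    · exact hyJ (hJ.out hzJ hxJ ⟨hyz, hy⟩)
  have right : ∀ {I J : Set ℝ}, I.OrdConnected → J.OrdConnected → ∀ {y z : ℝ},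
      x ∈ I → x ∈ J → y ∈ I → z ∈ J → y ∉ J → z ∉ I → x ≤ y → x ≤ z → False := by
    intro I J hI hJ y z hxI hxJ hyI hzJ hyJ hzI hy hz
    rcases le_total y z with hyz | hyz
    · exact hyJ (hJ.out hxJ hzJ ⟨hy, hyz⟩)
    · exact hzI (hI.out hxI hyI ⟨hz, hyz⟩)
  rcases le_total y₁ x with c1 | c1 <;> rcases le_total y₂ x with c2 | c2 <;>
    rcases le_total y₃ x with c3 | c3
  · exact left h₁ h₂ hx₁ hx₂ hy₁ hy₂ hy₁'.1 hy₂'.1 c1 c2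
  · exact left h₁ h₂ hx₁ hx₂ hy₁ hy₂ hy₁'.1 hy₂'.1 c1 c2
  · exact left h₁ h₃ hx₁ hx₃ hy₁ hy₃ hy₁'.2 hy₃'.1 c1 c3
  · exact right h₂ h₃ hx₂ hx₃ hy₂ hy₃ hy₂'.2 hy₃'.2 c2 c3
  · exact left h₂ h₃ hx₂ hx₃ hy₂ hy₃ hy₂'.2 hy₃'.2 c2 c3
  · exact right h₁ h₃ hx₁ hx₃ hy₁ hy₃ hy₁'.2 hy₃'.1 c1 c3
  · exact right h₁ h₂ hx₁ hx₂ hy₁ hy₂ hy₁'.1 hy₂'.1 c1 c2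
  · exact right h₁ h₂ hx₁ hx₂ hy₁ hy₂ hy₁'.1 hy₂'.1 c1 c2

lemma exists_overlap2 (𝒥 : Finset (Set ℝ)) (hord : ∀ J ∈ 𝒥, (J : Set ℝ).OrdConnected) :
    ∃ t ⊆ 𝒥, (⋃ J ∈ t, (J : Set ℝ)) = (⋃ J ∈ 𝒥, (J : Set ℝ)) ∧
      ∀ x : ℝ, (t.filter (fun J => x ∈ J)).card ≤ 2 := by
  obtain ⟨t, htmem, hmin⟩ := Finset.exists_min_image
    (𝒥.powerset.filter (fun t => (⋃ J ∈ t, (J : Set ℝ)) = (⋃ J ∈ 𝒥, (J : Set ℝ))))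
    Finset.card ⟨𝒥, by simp⟩
  rw [Finset.mem_filter, Finset.mem_powerset] at htmem
  obtain ⟨hts, htu⟩ := htmem
  refine ⟨t, hts, htu, ?_⟩
  -- removal claim
  have claim : ∀ J ∈ t, ¬ (J ⊆ ⋃ J' ∈ t.erase J, (J' : Set ℝ)) := by
    intro J hJ hsub
    have hunion : (⋃ J' ∈ t.erase J, (J' : Set ℝ)) = ⋃ J' ∈ t, (J' : Set ℝ) := by
      apply subset_antisymm
      · exact Set.biUnion_subset_biUnion_left (fun J' hJ' => Finset.mem_of_mem_erase hJ')
      · intro y hy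
        simp only [Set.mem_iUnion, exists_prop] at hy ⊢
        obtain ⟨J', hJ', hyJ'⟩ := hy
        by_cases he : J' = J
        · subst he
          have := hsub hyJ'
          simp only [Set.mem_iUnion, exists_prop] at this
          exact this
        · exact ⟨J', Finset.mem_erase.mpr ⟨he, hJ'⟩, hyJ'⟩
    have hmem' : t.erase J ∈ 𝒥.powerset.filter
        (fun t => (⋃ J ∈ t, (J : Set ℝ)) = (⋃ J ∈ 𝒥, (J : Set ℝ))) := by
      rw [Finset.mem_filter, Finset.mem_powerset]
      exact ⟨(Finset.erase_subset _ _).trans hts, hunion.trans htu⟩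
    have := hmin _ hmem'
    have hlt : (t.erase J).card < t.card := Finset.card_erase_lt_of_mem hJ
    omega
  intro x
  by_contra hc
  push_neg at hc
  rw [Finset.two_lt_card_iff] at hc
  obtain ⟨J₁, J₂, J₃, h1, h2, h3, h12, h13, h23⟩ := hc
  rw [Finset.mem_filter] at h1 h2 h3
  have ho1 := hord J₁ (hts h1.1); have ho2 := hord J₂ (hts h2.1); have ho3 := hord J₃ (hts h3.1)
  have hsub2 : ∀ {Ja Jb Jc : Set ℝ}, Ja ∈ t → Jb ∈ t → Jc ∈ t → Ja ≠ Jb → Ja ≠ Jc →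
      Ja ⊆ Jb ∪ Jc → False := by
    intro Ja Jb Jc ha hb hcmem hab hac hsub
    refine claim Ja ha (hsub.trans ?_)
    refine Set.union_subset ?_ ?_
    · intro y hy
      exact Set.mem_biUnion (Finset.mem_erase.mpr ⟨hab.symm, hb⟩) hy
    · intro y hy
      exact Set.mem_biUnion (Finset.mem_erase.mpr ⟨hac.symm, hcmem⟩) hy
  rcases three_ordConnected ho1 ho2 ho3 h1.2 h2.2 h3.2 with hs | hs | hs
  · exact hsub2 h1.1 h2.1 h3.1 h12 h13 hs
  · exact hsub2 h2.1 h1.1 h3.1 h12.symm h23 hs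
  · exact hsub2 h3.1 h1.1 h2.1 h13.symm h23.symm hs

lemma sum_measure_le_two (μ : Measure ℝ) [IsProbabilityMeasure μ] (t : Finset (Set ℝ))
    (hm : ∀ J ∈ t, MeasurableSet J) (hover : ∀ x : ℝ, (t.filter (fun J => x ∈ J)).card ≤ 2) :
    ∑ J ∈ t, μ J ≤ 2 := by
  have h1 : ∀ J ∈ t, μ J = ∫⁻ x, J.indicator (fun _ => (1 : ENNReal)) x ∂μ := by
    intro J hJ
    rw [lintegral_indicator (hm J hJ) _]
    simp
  calc ∑ J ∈ t, μ J = ∑ J ∈ t, ∫⁻ x, J.indicator (fun _ => (1 : ENNReal)) x ∂μ :=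
        Finset.sum_congr rfl h1
    _ = ∫⁻ x, ∑ J ∈ t, J.indicator (fun _ => (1 : ENNReal)) x ∂μ := by
        rw [lintegral_finset_sum]
        intro J hJ
        exact (measurable_const.indicator (hm J hJ))
    _ ≤ ∫⁻ _, (2 : ENNReal) ∂μ := by
        apply lintegral_mono
        intro x
        have : ∑ J ∈ t, J.indicator (fun _ => (1 : ENNReal)) x
            = ((t.filter (fun J => x ∈ J)).card : ENNReal) := by
          rw [Finset.card_filter]
          push_cast
          refine Finset.sum_congr rfl fun J hJ => ?_
          simp [Set.indicator_apply]
        simp only []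
        rw [this]
        exact_mod_cast Nat.cast_le.mpr (hover x)
    _ = 2 := by simp

lemma weak_estimate (μ : Measure ℝ) [IsProbabilityMeasure μ] {A : Set ℝ} (hA : MeasurableSet A)
    (l : ENNReal) :
    μ (A ∩ ⋃₀ {I : Set ℝ | IsOpen I ∧ I.OrdConnected ∧ μ (A ∩ I) ≤ l * μ I}) ≤ 2 * l := by
  set 𝓘 : Set (Set ℝ) := {I : Set ℝ | IsOpen I ∧ I.OrdConnected ∧ μ (A ∩ I) ≤ l * μ I} with h𝓘
  have hUopen : IsOpen (⋃₀ 𝓘) := isOpen_sUnion (fun I hI => hI.1)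
  have hE : MeasurableSet (A ∩ ⋃₀ 𝓘) := hA.inter hUopen.measurableSet
  have key : ∀ K : Set ℝ, K ⊆ A ∩ ⋃₀ 𝓘 → IsCompact K → μ K ≤ 2 * l := by
    intro K hK hKc
    have hKU : K ⊆ ⋃ i : 𝓘, (i : Set ℝ) := by
      intro y hy
      obtain ⟨I, hI, hyI⟩ := (hK hy).2
      exact Set.mem_iUnion.mpr ⟨⟨I, hI⟩, hyI⟩
    obtain ⟨s, hs⟩ := hKc.elim_finite_subcover (fun i : 𝓘 => (i : Set ℝ))
      (fun i => i.2.1) hKU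
    set 𝒥 : Finset (Set ℝ) := s.image Subtype.val with h𝒥
    have h𝒥mem : ∀ J ∈ 𝒥, J ∈ 𝓘 := by
      intro J hJ
      obtain ⟨i, _, rfl⟩ := Finset.mem_image.mp hJ
      exact i.2
    have hK𝒥 : K ⊆ ⋃ J ∈ 𝒥, (J : Set ℝ) := by
      intro y hy
      obtain ⟨i, hi⟩ := Set.mem_iUnion.mp (hs hy)
      simp only [Set.mem_iUnion, exists_prop] at hi
      exact Set.mem_biUnion (Finset.mem_image_of_mem _ hi.1) hi.2
    obtain ⟨t, ht𝒥, htu, hover⟩ := exists_overlap2 𝒥 (fun J hJ => (h𝒥mem J hJ).2.1)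
    have hKt : K ⊆ ⋃ J ∈ t, (J : Set ℝ) := htu ▸ hK𝒥
    have htmem : ∀ J ∈ t, J ∈ 𝓘 := fun J hJ => h𝒥mem J (ht𝒥 hJ)
    calc μ K ≤ μ (⋃ J ∈ t, (K ∩ J : Set ℝ)) := by
          apply measure_mono
          intro y hy
          obtain ⟨J, hJ⟩ := Set.mem_iUnion.mp (hKt hy)
          simp only [Set.mem_iUnion, exists_prop] at hJ ⊢
          exact ⟨J, hJ.1, hy, hJ.2⟩
      _ ≤ ∑ J ∈ t, μ (K ∩ J) := measure_biUnion_finset_le t _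
      _ ≤ ∑ J ∈ t, μ (A ∩ J) := by
          refine Finset.sum_le_sum fun J hJ => measure_mono ?_
          exact Set.inter_subset_inter_left _ (fun y hy => (hK hy).1)
      _ ≤ ∑ J ∈ t, l * μ J := Finset.sum_le_sum fun J hJ => (htmem J hJ).2.2
      _ = l * ∑ J ∈ t, μ J := by rw [Finset.mul_sum]
      _ ≤ l * 2 := by
          gcongr
          exact sum_measure_le_two μ t (fun J hJ => (htmem J hJ).1.measurableSet) hover
      _ = 2 * l := mul_comm _ _
  refine ENNReal.le_of_forall_pos_le_add fun ε hε _ => ?_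
  obtain ⟨K, hK1, hK2, hK3⟩ := hE.exists_isCompact_lt_add (measure_ne_top μ _)
    (ε := ε) (by exact_mod_cast hε.ne')
  calc μ (A ∩ ⋃₀ 𝓘) ≤ μ K + ε := hK3.le
    _ ≤ 2 * l + ε := add_le_add (key K hK1 hK2) le_rfl

noncomputable def Sat (μ : Measure ℝ) (A : Set ℝ) (x : ℝ) : Set ℝ :=
  {r : ℝ | ∃ I : Set ℝ, IsOpen I ∧ I.OrdConnected ∧ x ∈ I ∧ 0 < μ I ∧
    r = (μ (A ∩ I)).toReal / (μ I).toReal}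

noncomputable def gstar (μ : Measure ℝ) (β : Set (Set ℝ)) (x : ℝ) : ℝ :=
  sInf ({1} ∪ {r : ℝ | ∃ A ∈ β, x ∈ A ∧ ∃ I : Set ℝ, IsOpen I ∧ I.OrdConnected ∧ x ∈ I ∧
    0 < μ I ∧ r = (μ (A ∩ I)).toReal / (μ I).toReal})

lemma Sat_bddBelow (μ : Measure ℝ) (A : Set ℝ) (x : ℝ) : BddBelow ({1} ∪ Sat μ A x) := by
  refine ⟨0, fun r hr => ?_⟩
  rcases hr with hr | hr
  · simp only [mem_singleton_iff] at hr; linarith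
  · obtain ⟨I, _, _, _, _, rfl⟩ := hr
    exact div_nonneg ENNReal.toReal_nonneg ENNReal.toReal_nonneg

lemma gstar_bddBelow (μ : Measure ℝ) (β : Set (Set ℝ)) (x : ℝ) :
    BddBelow ({1} ∪ {r : ℝ | ∃ A ∈ β, x ∈ A ∧ ∃ I : Set ℝ, IsOpen I ∧ I.OrdConnected ∧ x ∈ I ∧
      0 < μ I ∧ r = (μ (A ∩ I)).toReal / (μ I).toReal}) := by
  refine ⟨0, fun r hr => ?_⟩
  rcases hr with hr | hr
  · simp only [mem_singleton_iff] at hr; linarith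
  · obtain ⟨A, _, _, I, _, _, _, _, rfl⟩ := hr
    exact div_nonneg ENNReal.toReal_nonneg ENNReal.toReal_nonneg

lemma gstar_eq_atom (μ : Measure ℝ) {β : Set (Set ℝ)} (hdisj : β.PairwiseDisjoint id)
    {A : Set ℝ} (hA : A ∈ β) {x : ℝ} (hx : x ∈ A) :
    gstar μ β x = sInf ({1} ∪ Sat μ A x) := by
  unfold gstar
  congr 1
  ext r
  simp only [Set.mem_union, Set.mem_singleton_iff, Set.mem_setOf_eq, Sat]
  constructor
  · rintro (rfl | ⟨A', hA', hx', hI⟩)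
    · exact Or.inl rfl
    · have : A' = A := hdisj.elim hA' hA (Set.not_disjoint_iff.mpr ⟨x, hx', hx⟩)
      subst this
      exact Or.inr hI
  · rintro (rfl | hI)
    · exact Or.inl rfl
    · exact Or.inr ⟨A, hA, hx, hI⟩

lemma gstar_nonneg (μ : Measure ℝ) (β : Set (Set ℝ)) (x : ℝ) : 0 ≤ gstar μ β x := by
  refine le_csInf ⟨1, Or.inl rfl⟩ fun r hr => ?_
  rcases hr with hr | hr
  · simp only [mem_singleton_iff] at hr; linarith
  · obtain ⟨A, _, _, I, _, _, _, _, rfl⟩ := hr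
    exact div_nonneg ENNReal.toReal_nonneg ENNReal.toReal_nonneg

lemma gstar_le_one (μ : Measure ℝ) (β : Set (Set ℝ)) (x : ℝ) : gstar μ β x ≤ 1 :=
  csInf_le (gstar_bddBelow μ β x) (Or.inl rfl)

lemma gstar_measurable (μ : Measure ℝ) {β : Set (Set ℝ)} (hctble : β.Countable)
    (hmeas : ∀ A ∈ β, MeasurableSet A) (hdisj : β.PairwiseDisjoint id)
    (hcov : ⋃₀ β = Set.univ) : Measurable (gstar μ β) := by
  haveI : Countable ↥β := hctble.to_subtype
  apply measurable_of_Iio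
  intro c
  have heq : gstar μ β ⁻¹' Iio c =
      ⋃ A : β, ((A : Set ℝ) ∩ {x | sInf ({1} ∪ Sat μ (A : Set ℝ) x) < c}) := by
    ext x
    simp only [Set.mem_preimage, Set.mem_Iio, Set.mem_iUnion, Set.mem_inter_iff,
      Set.mem_setOf_eq]
    constructor
    · intro hx
      have hxuniv : x ∈ ⋃₀ β := hcov ▸ Set.mem_univ x
      obtain ⟨A, hA, hxA⟩ := hxuniv
      exact ⟨⟨A, hA⟩, hxA, by rwa [← gstar_eq_atom μ hdisj hA hxA]⟩
    · rintro ⟨⟨A, hA⟩, hxA, hlt⟩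
      rwa [gstar_eq_atom μ hdisj hA hxA]
  rw [heq]
  refine MeasurableSet.iUnion fun A => (hmeas A A.2).inter ?_
  by_cases h1c : 1 < c
  · have : {x : ℝ | sInf ({1} ∪ Sat μ (A : Set ℝ) x) < c} = univ := by
      ext x
      simp only [Set.mem_setOf_eq, Set.mem_univ, iff_true]
      exact lt_of_le_of_lt (csInf_le (Sat_bddBelow μ _ x) (Or.inl rfl)) h1c
    rw [this]; exact MeasurableSet.univ
  · have : {x : ℝ | sInf ({1} ∪ Sat μ (A : Set ℝ) x) < c} =
        ⋃₀ {I : Set ℝ | IsOpen I ∧ I.OrdConnected ∧ 0 < μ I ∧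
          (μ ((A : Set ℝ) ∩ I)).toReal / (μ I).toReal < c} := by
      ext x
      simp only [Set.mem_setOf_eq, Set.mem_sUnion]
      constructor
      · intro hx
        obtain ⟨r, hr, hrc⟩ := exists_lt_of_csInf_lt (s := {1} ∪ Sat μ (A : Set ℝ) x) ⟨1, Set.mem_union_left _ rfl⟩ hx
        rcases hr with hr | hr
        · simp only [mem_singleton_iff] at hr; subst hr; exact absurd hrc h1c
        · obtain ⟨I, hIo, hIc, hxI, hIpos, rfl⟩ := hr
          exact ⟨I, ⟨hIo, hIc, hIpos, hrc⟩, hxI⟩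
      · rintro ⟨I, ⟨hIo, hIc, hIpos, hrc⟩, hxI⟩
        refine lt_of_le_of_lt (csInf_le (Sat_bddBelow μ _ x) ?_) hrc
        exact Or.inr ⟨I, hIo, hIc, hxI, hIpos, rfl⟩
    rw [this]
    exact (isOpen_sUnion fun I hI => hI.1).measurableSet

lemma atom_bound (μ : Measure ℝ) [IsProbabilityMeasure μ] {β : Set (Set ℝ)}
    (hctble : β.Countable) (hmeas : ∀ A ∈ β, MeasurableSet A)
    (hdisj : β.PairwiseDisjoint id) (hcov : ⋃₀ β = Set.univ)
    {A : Set ℝ} (hA : A ∈ β) (hA0 : μ A ≠ 0) :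
    ∫⁻ x in A, ENNReal.ofReal (-Real.log (gstar μ β x)) ∂μ ≤
      ENNReal.ofReal ((μ A).toReal * Real.log 2
        + -((μ A).toReal * Real.log (μ A).toReal) + (μ A).toReal) := by
  set f : ℝ → ℝ := fun x => -Real.log (gstar μ β x) with hf
  have hf_nonneg : ∀ x, 0 ≤ f x := fun x =>
    neg_nonneg.mpr (Real.log_nonpos (gstar_nonneg μ β x) (gstar_le_one μ β x))
  have hfm : Measurable f :=
    (Real.measurable_log.comp (gstar_measurable μ hctble hmeas hdisj hcov)).neg
  set a : ℝ := (μ A).toReal with ha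
  have ha0 : 0 < a := ENNReal.toReal_pos hA0 (measure_ne_top μ A)
  have ha1 : a ≤ 1 := by
    have := ENNReal.toReal_mono ENNReal.one_ne_top (prob_le_one (μ := μ) (s := A))
    simpa using this
  set T : ℝ := Real.log 2 - Real.log a with hT
  have hT0 : 0 ≤ T :=
    sub_nonneg.mpr ((Real.log_nonpos ha0.le ha1).trans (Real.log_nonneg one_le_two))
  -- sublevel set containment
  have hsub : ∀ t : ℝ, 0 < t → {x | t < f x} ∩ A ⊆
      A ∩ ⋃₀ {I : Set ℝ | IsOpen I ∧ I.OrdConnected ∧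
        μ (A ∩ I) ≤ ENNReal.ofReal (Real.exp (-t)) * μ I} := by
    intro t ht x hx
    obtain ⟨hxf, hxA⟩ := hx
    refine ⟨hxA, ?_⟩
    have hlog : Real.log (gstar μ β x) < -t := by
      simp only [Set.mem_setOf_eq, hf] at hxf; linarith
    have hgx : gstar μ β x < Real.exp (-t) := by
      rcases eq_or_lt_of_le (gstar_nonneg μ β x) with h0 | h0
      · rw [← h0]; exact Real.exp_pos _
      · calc gstar μ β x = Real.exp (Real.log (gstar μ β x)) := (Real.exp_log h0).symm
          _ < Real.exp (-t) := Real.exp_lt_exp.mpr hlog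
    rw [gstar_eq_atom μ hdisj hA hxA] at hgx
    obtain ⟨r, hr, hrc⟩ := exists_lt_of_csInf_lt (s := {1} ∪ Sat μ A x)
      ⟨1, Set.mem_union_left _ rfl⟩ hgx
    rcases hr with hr | hr
    · simp only [mem_singleton_iff] at hr
      subst hr
      exfalso
      have : Real.exp (-t) < 1 := Real.exp_lt_one_iff.mpr (by linarith)
      linarith
    · obtain ⟨I, hIo, hIc, hxI, hIpos, rfl⟩ := hr
      have hItop : μ I ≠ ⊤ := measure_ne_top μ I
      have hIr : 0 < (μ I).toReal := ENNReal.toReal_pos hIpos.ne' hItop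
      have hlt : (μ (A ∩ I)).toReal < Real.exp (-t) * (μ I).toReal :=
        (div_lt_iff₀ hIr).mp hrc
      have hkey : μ (A ∩ I) ≤ ENNReal.ofReal (Real.exp (-t)) * μ I := by
        rw [← ENNReal.ofReal_toReal (measure_ne_top μ (A ∩ I)),
          ← ENNReal.ofReal_toReal hItop, ← ENNReal.ofReal_mul (Real.exp_pos _).le]
        exact ENNReal.ofReal_le_ofReal hlt.le
      exact ⟨I, ⟨hIo, hIc, hkey⟩, hxI⟩
  rw [lintegral_eq_lintegral_meas_lt (μ.restrict A) (ae_of_all _ hf_nonneg) hfm.aemeasurable]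
  have hFbound : ∀ t ∈ Ioi (0:ℝ),
      (μ.restrict A) {x | t < f x} ≤ min (μ A) (2 * ENNReal.ofReal (Real.exp (-t))) := by
    intro t ht
    rw [Measure.restrict_apply' (hmeas A hA)]
    refine le_min (measure_mono inter_subset_right) ?_
    calc μ ({x | t < f x} ∩ A) ≤ μ (A ∩ ⋃₀ {I : Set ℝ | IsOpen I ∧ I.OrdConnected ∧
          μ (A ∩ I) ≤ ENNReal.ofReal (Real.exp (-t)) * μ I}) :=
        measure_mono (hsub t ht)
      _ ≤ 2 * ENNReal.ofReal (Real.exp (-t)) := weak_estimate μ (hmeas A hA) _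
  have hsplit : (Ioc (0:ℝ) T) ∪ Ioi T = Ioi 0 := Set.Ioc_union_Ioi_eq_Ioi hT0
  calc ∫⁻ t in Ioi (0:ℝ), (μ.restrict A) {x | t < f x}
      ≤ ∫⁻ t in Ioi (0:ℝ), min (μ A) (2 * ENNReal.ofReal (Real.exp (-t))) := by
        refine lintegral_mono_ae ?_
        filter_upwards [ae_restrict_mem measurableSet_Ioi] with t ht using hFbound t ht
    _ = (∫⁻ t in Ioc (0:ℝ) T, min (μ A) (2 * ENNReal.ofReal (Real.exp (-t))))
        + ∫⁻ t in Ioi T, min (μ A) (2 * ENNReal.ofReal (Real.exp (-t))) := by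
        rw [← lintegral_union measurableSet_Ioi (Set.Ioc_disjoint_Ioi le_rfl), hsplit]
    _ ≤ (∫⁻ _ in Ioc (0:ℝ) T, μ A) + ∫⁻ t in Ioi T, 2 * ENNReal.ofReal (Real.exp (-t)) :=
        add_le_add (lintegral_mono fun t => min_le_left _ _)
          (lintegral_mono fun t => min_le_right _ _)
    _ = μ A * ENNReal.ofReal T + 2 * ENNReal.ofReal (Real.exp (-T)) := by
        rw [setLIntegral_const, Real.volume_Ioc, sub_zero]
        congr 1
        have hm2 : Measurable fun t : ℝ => ENNReal.ofReal (Real.exp (-t)) := by fun_prop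
        rw [lintegral_const_mul 2 hm2]
        congr 1
        rw [← ofReal_integral_eq_lintegral_ofReal
          (by simpa [IntegrableOn] using exp_neg_integrableOn_Ioi T one_pos)
          (ae_of_all _ fun t => (Real.exp_pos _).le), integral_exp_neg_Ioi]
    _ = ENNReal.ofReal (a * T) + ENNReal.ofReal a := by
        congr 1
        · rw [← ENNReal.ofReal_toReal (measure_ne_top μ A), ← ha,
            ← ENNReal.ofReal_mul ENNReal.toReal_nonneg]
        · have hexp : Real.exp (-T) = a / 2 := by
            rw [hT, neg_sub, Real.exp_sub, Real.exp_log ha0, Real.exp_log two_pos]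
          rw [hexp]
          rw [show (2 : ENNReal) = ENNReal.ofReal 2 by simp,
            ← ENNReal.ofReal_mul (by norm_num)]
          congr 1
          ring
    _ = ENNReal.ofReal (a * T + a) := by
        rw [ENNReal.ofReal_add (mul_nonneg ha0.le hT0) ha0.le]
    _ = ENNReal.ofReal (a * Real.log 2 + -(a * Real.log a) + a) := by
        congr 1
        rw [hT]
        ring
end Aux

set_option maxHeartbeats 1000000 in
open Set Classical Real in
theorem minimal_function_entropy_bound (μ : Measure ℝ) [IsProbabilityMeasure μ]
    (β : Set (Set ℝ)) (hctble : β.Countable) (hmeas : ∀ A ∈ β, MeasurableSet A)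
    (hdisj : β.PairwiseDisjoint id) (hcov : ⋃₀ β = Set.univ)
    (hH : Summable fun A : β => -((μ (A : Set ℝ)).toReal * Real.log (μ (A : Set ℝ)).toReal)) :
    ∫⁻ x, ENNReal.ofReal (-Real.log (sInf ({1} ∪
        {r : ℝ | ∃ A ∈ β, x ∈ A ∧ ∃ I : Set ℝ, IsOpen I ∧ I.OrdConnected ∧ x ∈ I ∧
          0 < μ I ∧ r = (μ (A ∩ I)).toReal / (μ I).toReal}))) ∂μ
      ≤ ENNReal.ofReal
          ((∑' A : β, -((μ (A : Set ℝ)).toReal * Real.log (μ (A : Set ℝ)).toReal))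
            + Real.log 2 + 1) := by
  haveI : Countable ↥β := hctble.to_subtype
  have hgoal : ∫⁻ x, ENNReal.ofReal (-Real.log (gstar μ β x)) ∂μ
      ≤ ENNReal.ofReal
          ((∑' A : β, -((μ (A : Set ℝ)).toReal * Real.log (μ (A : Set ℝ)).toReal))
            + Real.log 2 + 1) := by
    have hcover : (⋃ A : β, (A : Set ℝ)) = univ := by
      rw [← hcov, Set.sUnion_eq_iUnion]
    have hdisj' : Pairwise (Function.onFun Disjoint fun A : β => (A : Set ℝ)) :=
      fun i j hij => hdisj i.2 j.2 (fun h => hij (Subtype.ext h))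
    have hmeas' : ∀ A : β, MeasurableSet (A : Set ℝ) := fun A => hmeas A A.2
    have htsum : ∑' A : β, μ (A : Set ℝ) = 1 := by
      rw [← measure_iUnion hdisj' hmeas', hcover, measure_univ]
    have hsum1 : Summable fun A : β => (μ (A : Set ℝ)).toReal :=
      ENNReal.summable_toReal (htsum ▸ ENNReal.one_ne_top)
    have htsum1 : ∑' A : β, (μ (A : Set ℝ)).toReal = 1 := by
      rw [← ENNReal.tsum_toReal_eq (fun A => measure_ne_top μ _), htsum, ENNReal.toReal_one]
    set b : β → ℝ := fun A => (μ (A : Set ℝ)).toReal * Real.log 2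
      + -((μ (A : Set ℝ)).toReal * Real.log (μ (A : Set ℝ)).toReal) + (μ (A : Set ℝ)).toReal
      with hb
    have hble1 : ∀ A : β, (μ (A : Set ℝ)).toReal ≤ 1 := by
      intro A
      have := ENNReal.toReal_mono ENNReal.one_ne_top (prob_le_one (μ := μ) (s := (A : Set ℝ)))
      simpa using this
    have hbnonneg : ∀ A : β, 0 ≤ b A := by
      intro A
      have h1 : 0 ≤ (μ (A : Set ℝ)).toReal * Real.log 2 :=
        mul_nonneg ENNReal.toReal_nonneg (Real.log_nonneg one_le_two)
      have h2 : 0 ≤ (μ (A : Set ℝ)).toReal * (-Real.log (μ (A : Set ℝ)).toReal) :=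
        mul_nonneg ENNReal.toReal_nonneg
          (neg_nonneg.mpr (Real.log_nonpos ENNReal.toReal_nonneg (hble1 A)))
      have h3 : (0:ℝ) ≤ (μ (A : Set ℝ)).toReal := ENNReal.toReal_nonneg
      simp only [hb]
      nlinarith
    have hbsummable : Summable b :=
      ((hsum1.mul_right (Real.log 2)).add hH).add hsum1
    calc ∫⁻ x, ENNReal.ofReal (-Real.log (gstar μ β x)) ∂μ
        = ∫⁻ x in ⋃ A : β, (A : Set ℝ), ENNReal.ofReal (-Real.log (gstar μ β x)) ∂μ := by
          rw [hcover, Measure.restrict_univ]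
      _ = ∑' A : β, ∫⁻ x in (A : Set ℝ), ENNReal.ofReal (-Real.log (gstar μ β x)) ∂μ :=
          lintegral_iUnion hmeas' hdisj' _
      _ ≤ ∑' A : β, ENNReal.ofReal (b A) := by
          refine ENNReal.tsum_le_tsum fun A => ?_
          by_cases hA0 : μ (A : Set ℝ) = 0
          · rw [Measure.restrict_eq_zero.mpr hA0, lintegral_zero_measure]
            exact bot_le
          · exact atom_bound μ hctble hmeas hdisj hcov A.2 hA0
      _ = ENNReal.ofReal (∑' A : β, b A) :=
          (ENNReal.ofReal_tsum_of_nonneg hbnonneg hbsummable).symm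
      _ = ENNReal.ofReal
          ((∑' A : β, -((μ (A : Set ℝ)).toReal * Real.log (μ (A : Set ℝ)).toReal))
            + Real.log 2 + 1) := by
          congr 1
          rw [hb]
          rw [Summable.tsum_add ((hsum1.mul_right (Real.log 2)).add hH) hsum1,
            Summable.tsum_add (hsum1.mul_right (Real.log 2)) hH, tsum_mul_right, htsum1]
          ring
  exact hgoal
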